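/- arXiv:1210.6613 — 3 statements merged into one kernel-verified Lean document; each statement's English description precedes it below -/
import Mathlib

section
/- Let A be a densely defined symmetric operator on a Hilbert space H whose domain D is an increasing union of subspaces Sₙ such that A maps Sₙ into Sₙ₊₁ and ‖A restricted to Sₙ‖ ≤ 2n + 2 for each n. Then every vector in D is an analytic vector for A: for each φ ∈ D there exists r > 0 such that Σₙ (rⁿ/n!)‖Aⁿφ‖ < ∞. -/
lemma choose_le_two_pow' (n k : ℕ) : n.choose k ≤ 2 ^ n := by
  rcases le_or_gt k n with h | h
  · calc n.choose k ≤ ∑ i ∈ Finset.range (n + 1), n.choose i :=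
        Finset.single_le_sum (fun i _ => Nat.zero_le _)
          (Finset.mem_range.mpr (Nat.lt_succ_of_le h))
    _ = 2 ^ n := Nat.sum_range_choose n
  · rw [Nat.choose_eq_zero_of_lt h]; exact Nat.zero_le _

/-- Let `A` be a densely defined symmetric operator on a Hilbert space whose
domain `D` is an increasing union of subspaces `Sₙ` with `A(Sₙ) ⊆ Sₙ₊₁` and
`‖A|_{Sₙ}‖ ≤ 2n+2`. Then every vector of `D` is an analytic vector for `A`. -/
theorem stmt_4 {H : Type*} [NormedAddCommGroup H] [InnerProductSpace ℂ H] [CompleteSpace H]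
    (D : Submodule ℂ H) (hdense : Dense (D : Set H))
    (A : D →ₗ[ℂ] D)
    (hsym : ∀ x y : D, (inner ℂ ((A x : D) : H) (y : H) : ℂ) = inner ℂ (x : H) ((A y : D) : H))
    (S : ℕ → Submodule ℂ H)
    (hmono : ∀ n, S n ≤ S (n + 1))
    (hunion : ∀ x : H, x ∈ D ↔ ∃ n, x ∈ S n)
    (hmap : ∀ n, ∀ x : D, (x : H) ∈ S n → ((A x : D) : H) ∈ S (n + 1))
    (hbound : ∀ n, ∀ x : D, (x : H) ∈ S n → ‖((A x : D) : H)‖ ≤ (2 * n + 2 : ℝ) * ‖(x : H)‖) :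
    ∀ φ : D, ∃ r : ℝ, 0 < r ∧
      Summable (fun n : ℕ => r ^ n / (n.factorial : ℝ) * ‖(((A ^ n) φ : D) : H)‖) := by
  intro φ
  obtain ⟨N, hN⟩ := (hunion (φ : H)).mp φ.2
  have hNfac : (0 : ℝ) < (N.factorial : ℝ) := by positivity
  have key : ∀ n : ℕ, (((A ^ n) φ : D) : H) ∈ S (N + n) ∧
      ‖(((A ^ n) φ : D) : H)‖ ≤
        2 ^ n * (((N + n).factorial : ℝ) / (N.factorial : ℝ)) * ‖(φ : H)‖ := by
    intro n
    induction n with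
    | zero =>
      simp only [pow_zero, Module.End.one_apply, Nat.add_zero]
      refine ⟨hN, ?_⟩
      rw [div_self (ne_of_gt hNfac), one_mul, one_mul]
    | succ n ih =>
      obtain ⟨hmem, hnorm⟩ := ih
      have heq : (A ^ (n + 1)) φ = A ((A ^ n) φ) := by
        rw [pow_succ', Module.End.mul_apply]
      refine ⟨?_, ?_⟩
      · rw [heq]
        have := hmap (N + n) ((A ^ n) φ) hmem
        rwa [show N + n + 1 = N + (n + 1) by ring] at this
      · rw [heq]
        have h1 := hbound (N + n) ((A ^ n) φ) hmem
        have h2 : (0 : ℝ) ≤ (2 * (N + n : ℕ) + 2 : ℝ) := by positivity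
        calc ‖((A ((A ^ n) φ) : D) : H)‖
            ≤ (2 * (N + n : ℕ) + 2 : ℝ) * ‖(((A ^ n) φ : D) : H)‖ := h1
          _ ≤ (2 * (N + n : ℕ) + 2 : ℝ) *
              (2 ^ n * (((N + n).factorial : ℝ) / (N.factorial : ℝ)) * ‖(φ : H)‖) := by
              exact mul_le_mul_of_nonneg_left hnorm h2
          _ = 2 ^ (n + 1) * (((N + (n + 1)).factorial : ℝ) / (N.factorial : ℝ)) * ‖(φ : H)‖ := by
              rw [show N + (n + 1) = (N + n) + 1 by ring, Nat.factorial_succ]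
              push_cast
              field_simp
              ring
  refine ⟨1/8, by norm_num, ?_⟩
  have hsum : Summable (fun n : ℕ => (2 : ℝ) ^ N * ‖(φ : H)‖ * (1/2) ^ n) :=
    (summable_geometric_of_lt_one (by norm_num) (by norm_num)).mul_left _
  refine Summable.of_nonneg_of_le (fun n => by positivity) (fun n => ?_) hsum
  obtain ⟨_, hnorm⟩ := key n
  have hfac : ((N + n).factorial : ℝ) = ((N + n).choose n : ℝ) * (n.factorial : ℝ) * (N.factorial : ℝ) := by
    rw [← Nat.cast_mul, ← Nat.cast_mul]
    congr 1
    have := Nat.choose_mul_factorial_mul_factorial (Nat.le_add_left n N)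
    rw [Nat.add_sub_cancel] at this
    exact this.symm
  have hch : ((N + n).choose n : ℝ) ≤ 2 ^ (N + n) := by
    exact_mod_cast choose_le_two_pow' (N + n) n
  have hnfac : (0 : ℝ) < (n.factorial : ℝ) := by positivity
  calc (1/8 : ℝ) ^ n / (n.factorial : ℝ) * ‖(((A ^ n) φ : D) : H)‖
      ≤ (1/8 : ℝ) ^ n / (n.factorial : ℝ) *
        (2 ^ n * (((N + n).factorial : ℝ) / (N.factorial : ℝ)) * ‖(φ : H)‖) := by
        exact mul_le_mul_of_nonneg_left hnorm (by positivity)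
    _ = (1/8 : ℝ) ^ n * 2 ^ n * ((N + n).choose n : ℝ) * ‖(φ : H)‖ := by
        rw [hfac]; field_simp
    _ ≤ (1/8 : ℝ) ^ n * 2 ^ n * 2 ^ (N + n) * ‖(φ : H)‖ := by
        have : (0:ℝ) ≤ (1/8 : ℝ) ^ n * 2 ^ n := by positivity
        exact mul_le_mul_of_nonneg_right (mul_le_mul_of_nonneg_left hch this) (norm_nonneg _)
    _ = (2 : ℝ) ^ N * ‖(φ : H)‖ * (1/2) ^ n := by
        have h8 : (1/8 : ℝ) ^ n = (1/2:ℝ)^n * (1/2:ℝ)^n * (1/2:ℝ)^n := by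
          rw [← mul_pow, ← mul_pow]; norm_num
        have h12 : ((1:ℝ)/2) ^ n * 2 ^ n = 1 := by rw [← mul_pow]; norm_num
        calc (1/8 : ℝ) ^ n * 2 ^ n * 2 ^ (N + n) * ‖(φ : H)‖
            = (2:ℝ)^N * ‖(φ : H)‖ * (1/2)^n *
              (((1/2:ℝ)^n * 2^n) * ((1/2:ℝ)^n * 2^n)) := by rw [pow_add, h8]; ring
          _ = (2:ℝ)^N * ‖(φ : H)‖ * (1/2)^n := by rw [h12]; ring
end

section
/- On an open qubit chain of length n ≥ 3, let H' = Σ_{i=1}^{n-2} h'_{i,i+1,i+2} where h' = I - |000⟩⟨000| - |111⟩⟨111| - |0+1⟩⟨0+1| - |1+0⟩⟨1+0|. Then the kernel of H' contains the four vectors |0⋯0⟩, |1⋯1⟩, Σ_{k=1}^{n-1} |0^k 1^{n-k}⟩ (sum over all positions of a single 0→1 domain wall), and Σ_{k=1}^{n-1} |1^k 0^{n-k}⟩. -/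
open Matrix

noncomputable section

def e0 : Fin 2 → ℂ := ![1, 0]
def e1 : Fin 2 → ℂ := ![0, 1]
def ePlus : Fin 2 → ℂ := ![1 / (Real.sqrt 2 : ℂ), 1 / (Real.sqrt 2 : ℂ)]

def ket3 (x y z : Fin 2 → ℂ) : Fin 2 × Fin 2 × Fin 2 → ℂ :=
  fun p => x p.1 * y p.2.1 * z p.2.2

def proj (v : Fin 2 × Fin 2 × Fin 2 → ℂ) :
    Matrix (Fin 2 × Fin 2 × Fin 2) (Fin 2 × Fin 2 × Fin 2) ℂ :=
  Matrix.vecMulVec v (star v)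

/-- `h' = I - |000⟩⟨000| - |111⟩⟨111| - |0+1⟩⟨0+1| - |1+0⟩⟨1+0|`. -/
def hGHZ : Matrix (Fin 2 × Fin 2 × Fin 2) (Fin 2 × Fin 2 × Fin 2) ℂ :=
  1 - proj (ket3 e0 e0 e0) - proj (ket3 e1 e1 e1)
    - proj (ket3 e0 ePlus e1) - proj (ket3 e1 ePlus e0)

/-- The local three-site operator `h` acting on the (open-chain) sites `i, i+1, i+2` of a
qubit chain of `n` sites; `0` when `i+2` is out of range. -/
def embedOpen {n : ℕ} (h : Matrix (Fin 2 × Fin 2 × Fin 2) (Fin 2 × Fin 2 × Fin 2) ℂ)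
    (i : ℕ) : Matrix (Fin n → Fin 2) (Fin n → Fin 2) ℂ :=
  if hi : i + 2 < n then
    fun f g =>
      (if ∀ j : Fin n, (j : ℕ) ≠ i → (j : ℕ) ≠ i + 1 → (j : ℕ) ≠ i + 2 → f j = g j
        then 1 else 0) *
      h (f ⟨i, by omega⟩, f ⟨i + 1, by omega⟩, f ⟨i + 2, hi⟩)
        (g ⟨i, by omega⟩, g ⟨i + 1, by omega⟩, g ⟨i + 2, hi⟩)
  else 0

/-- The computational basis state with configuration `c`. -/
def basisState {n : ℕ} (c : Fin n → Fin 2) : (Fin n → Fin 2) → ℂ :=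
  fun f => if f = c then 1 else 0

lemma hs2 : ((Real.sqrt 2 : ℝ) : ℂ) * ((Real.sqrt 2 : ℝ) : ℂ) = 2 := by
  rw [← Complex.ofReal_mul, Real.mul_self_sqrt (by norm_num : (0:ℝ) ≤ 2)]
  norm_num

lemma col000 (x : Fin 2 × Fin 2 × Fin 2) : hGHZ x (0,0,0) = 0 := by
  obtain ⟨a,b,c⟩ := x
  fin_cases a <;> fin_cases b <;> fin_cases c <;>
    simp [hGHZ, proj, ket3, e0, e1, ePlus, Matrix.vecMulVec_apply, Matrix.one_apply,
      Matrix.sub_apply, Prod.ext_iff]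

lemma col111 (x : Fin 2 × Fin 2 × Fin 2) : hGHZ x (1,1,1) = 0 := by
  obtain ⟨a,b,c⟩ := x
  fin_cases a <;> fin_cases b <;> fin_cases c <;>
    simp [hGHZ, proj, ket3, e0, e1, ePlus, Matrix.vecMulVec_apply, Matrix.one_apply,
      Matrix.sub_apply, Prod.ext_iff]

lemma colsum0 (x : Fin 2 × Fin 2 × Fin 2) : hGHZ x (0,1,1) + hGHZ x (0,0,1) = 0 := by
  obtain ⟨a,b,c⟩ := x
  have h2 := hs2
  fin_cases a <;> fin_cases b <;> fin_cases c <;>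
    simp [hGHZ, proj, ket3, e0, e1, ePlus, Matrix.vecMulVec_apply, Matrix.one_apply,
      Matrix.sub_apply, Prod.ext_iff] <;>
    field_simp <;> linear_combination h2

lemma colsum1 (x : Fin 2 × Fin 2 × Fin 2) : hGHZ x (1,0,0) + hGHZ x (1,1,0) = 0 := by
  obtain ⟨a,b,c⟩ := x
  have h2 := hs2
  fin_cases a <;> fin_cases b <;> fin_cases c <;>
    simp [hGHZ, proj, ket3, e0, e1, ePlus, Matrix.vecMulVec_apply, Matrix.one_apply,
      Matrix.sub_apply, Prod.ext_iff] <;>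
    field_simp <;> linear_combination h2

lemma embed_apply {n : ℕ} (h : Matrix (Fin 2 × Fin 2 × Fin 2) (Fin 2 × Fin 2 × Fin 2) ℂ)
    {i : ℕ} (hi : i + 2 < n) (f g : Fin n → Fin 2) :
    embedOpen (n := n) h i f g =
      (if ∀ j : Fin n, (j : ℕ) ≠ i → (j : ℕ) ≠ i + 1 → (j : ℕ) ≠ i + 2 → f j = g j
        then 1 else 0) *
      h (f ⟨i, by omega⟩, f ⟨i + 1, by omega⟩, f ⟨i + 2, hi⟩)
        (g ⟨i, by omega⟩, g ⟨i + 1, by omega⟩, g ⟨i + 2, hi⟩) := by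
  unfold embedOpen
  exact congrArg (fun M : Matrix (Fin n → Fin 2) (Fin n → Fin 2) ℂ => M f g) (dif_pos hi)

lemma mulVec_basis {n : ℕ} (M : Matrix (Fin n → Fin 2) (Fin n → Fin 2) ℂ)
    (c : Fin n → Fin 2) : M.mulVec (basisState c) = fun f => M f c := by
  funext f
  simp [Matrix.mulVec, dotProduct, basisState, mul_ite, mul_one, mul_zero]

lemma mulVec_sum_basis {n : ℕ} (M : Matrix (Fin n → Fin 2) (Fin n → Fin 2) ℂ)
    (s : Finset ℕ) (c : ℕ → Fin n → Fin 2) :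
    M.mulVec (∑ k ∈ s, basisState (c k)) = fun f => ∑ k ∈ s, M f (c k) := by
  funext f
  simp only [Matrix.mulVec, dotProduct, Finset.sum_apply, basisState, Finset.mul_sum,
    mul_ite, mul_one, mul_zero]
  rw [Finset.sum_comm]
  simp


/-- on an open qubit chain of length `n ≥ 3` with
`H' = Σ_{i} h'_{i,i+1,i+2}`, the kernel of `H'` contains `|0⋯0⟩`, `|1⋯1⟩`, the zero-momentum
domain-wall state `Σ_{k=1}^{n-1} |0^k 1^{n-k}⟩`, and `Σ_{k=1}^{n-1} |1^k 0^{n-k}⟩`. -/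
theorem stmt_14 (n : ℕ) (hn : 3 ≤ n) :
    (∑ i ∈ Finset.range (n - 2), embedOpen (n := n) hGHZ i).mulVec
        (basisState (fun _ => (0 : Fin 2))) = 0 ∧
    (∑ i ∈ Finset.range (n - 2), embedOpen (n := n) hGHZ i).mulVec
        (basisState (fun _ => (1 : Fin 2))) = 0 ∧
    (∑ i ∈ Finset.range (n - 2), embedOpen (n := n) hGHZ i).mulVec
        (∑ k ∈ Finset.Ico 1 n,
          basisState (fun j => if (j : ℕ) < k then (0 : Fin 2) else 1)) = 0 ∧
    (∑ i ∈ Finset.range (n - 2), embedOpen (n := n) hGHZ i).mulVec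
        (∑ k ∈ Finset.Ico 1 n,
          basisState (fun j => if (j : ℕ) < k then (1 : Fin 2) else 0)) = 0 := by

  refine ⟨?_, ?_, ?_, ?_⟩
  · rw [mulVec_basis]
    funext f
    rw [Matrix.sum_apply]
    apply Finset.sum_eq_zero
    intro i hi
    have hi2 : i + 2 < n := by have := Finset.mem_range.mp hi; omega
    rw [embed_apply hGHZ hi2, col000, mul_zero]
  · rw [mulVec_basis]
    funext f
    rw [Matrix.sum_apply]
    apply Finset.sum_eq_zero
    intro i hi
    have hi2 : i + 2 < n := by have := Finset.mem_range.mp hi; omega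
    rw [embed_apply hGHZ hi2, col111, mul_zero]
  · rw [mulVec_sum_basis]
    funext f
    simp only [Finset.sum_apply, Pi.zero_apply, Matrix.sum_apply]
    rw [Finset.sum_comm]
    apply Finset.sum_eq_zero
    intro i hi
    have hi2 : i + 2 < n := by have := Finset.mem_range.mp hi; omega
    have hsub : ({i+1, i+2} : Finset ℕ) ⊆ Finset.Ico 1 n := by
      intro x hx
      simp only [Finset.mem_insert, Finset.mem_singleton] at hx
      rcases hx with rfl | rfl <;> simp [Finset.mem_Ico] <;> omega
    rw [← Finset.sum_subset hsub]
    · rw [Finset.sum_insert (by simp), Finset.sum_singleton,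
        embed_apply hGHZ hi2, embed_apply hGHZ hi2]
      simp only [Fin.mk_lt_mk]
      rw [if_pos (by omega : i < i + 1), if_neg (by omega : ¬ i + 1 < i + 1),
        if_neg (by omega : ¬ i + 2 < i + 1),
        if_pos (by omega : i < i + 2), if_pos (by omega : i + 1 < i + 2),
        if_neg (by omega : ¬ i + 2 < i + 2)]
      have hiff : (∀ j : Fin n, (j : ℕ) ≠ i → (j : ℕ) ≠ i + 1 → (j : ℕ) ≠ i + 2 →
            f j = if (j : ℕ) < i + 1 then 0 else 1) ↔
          (∀ j : Fin n, (j : ℕ) ≠ i → (j : ℕ) ≠ i + 1 → (j : ℕ) ≠ i + 2 →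
            f j = if (j : ℕ) < i + 2 then 0 else 1) := by
        apply forall_congr'
        intro j
        by_cases hj : (j : ℕ) = i + 1
        · simp [hj]
        · have h12 : ((j : ℕ) < i + 1) ↔ ((j : ℕ) < i + 2) := by omega
          simp only [h12]
      rw [if_congr hiff rfl rfl, ← mul_add, colsum0, mul_zero]
    · intro k hk hk2
      simp only [Finset.mem_insert, Finset.mem_singleton, not_or] at hk2
      rw [Finset.mem_Ico] at hk
      rw [embed_apply hGHZ hi2]
      simp only [Fin.mk_lt_mk]
      rcases (show k ≤ i ∨ i + 3 ≤ k by omega) with hki | hki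
      · rw [if_neg (by omega : ¬ i < k), if_neg (by omega : ¬ i + 1 < k),
          if_neg (by omega : ¬ i + 2 < k), col111, mul_zero]
      · rw [if_pos (by omega : i < k), if_pos (by omega : i + 1 < k),
          if_pos (by omega : i + 2 < k), col000, mul_zero]
  · rw [mulVec_sum_basis]
    funext f
    simp only [Finset.sum_apply, Pi.zero_apply, Matrix.sum_apply]
    rw [Finset.sum_comm]
    apply Finset.sum_eq_zero
    intro i hi
    have hi2 : i + 2 < n := by have := Finset.mem_range.mp hi; omega
    have hsub : ({i+1, i+2} : Finset ℕ) ⊆ Finset.Ico 1 n := by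
      intro x hx
      simp only [Finset.mem_insert, Finset.mem_singleton] at hx
      rcases hx with rfl | rfl <;> simp [Finset.mem_Ico] <;> omega
    rw [← Finset.sum_subset hsub]
    · rw [Finset.sum_insert (by simp), Finset.sum_singleton,
        embed_apply hGHZ hi2, embed_apply hGHZ hi2]
      simp only [Fin.mk_lt_mk]
      rw [if_pos (by omega : i < i + 1), if_neg (by omega : ¬ i + 1 < i + 1),
        if_neg (by omega : ¬ i + 2 < i + 1),
        if_pos (by omega : i < i + 2), if_pos (by omega : i + 1 < i + 2),
        if_neg (by omega : ¬ i + 2 < i + 2)]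
      have hiff : (∀ j : Fin n, (j : ℕ) ≠ i → (j : ℕ) ≠ i + 1 → (j : ℕ) ≠ i + 2 →
            f j = if (j : ℕ) < i + 1 then 1 else 0) ↔
          (∀ j : Fin n, (j : ℕ) ≠ i → (j : ℕ) ≠ i + 1 → (j : ℕ) ≠ i + 2 →
            f j = if (j : ℕ) < i + 2 then 1 else 0) := by
        apply forall_congr'
        intro j
        by_cases hj : (j : ℕ) = i + 1
        · simp [hj]
        · have h12 : ((j : ℕ) < i + 1) ↔ ((j : ℕ) < i + 2) := by omega
          simp only [h12]
      rw [if_congr hiff rfl rfl, ← mul_add, colsum1, mul_zero]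
    · intro k hk hk2
      simp only [Finset.mem_insert, Finset.mem_singleton, not_or] at hk2
      rw [Finset.mem_Ico] at hk
      rw [embed_apply hGHZ hi2]
      simp only [Fin.mk_lt_mk]
      rcases (show k ≤ i ∨ i + 3 ≤ k by omega) with hki | hki
      · rw [if_neg (by omega : ¬ i < k), if_neg (by omega : ¬ i + 1 < k),
          if_neg (by omega : ¬ i + 2 < k), col000, mul_zero]
      · rw [if_pos (by omega : i < k), if_pos (by omega : i + 1 < k),
          if_pos (by omega : i + 2 < k), col111, mul_zero]


end
end

section
/- Let E be a completely positive linear map on D×D complex matrices of the form E(X) = Σₖ Aₖ X Bₖ*, and suppose there exists a positive definite matrix Λ with Σₖ Aₖ* Λ Aₖ ≤ Λ and Σₖ Bₖ Λ' Bₖ* ≤ Λ' for a positive definite Λ' (normalization conditions of two injective MPS blocks), and that span{Aₖ} ∩ span{Bₖ} = {0} as subspaces of matrices with appropriate strictness as in the Cauchy–Schwarz argument. Then every eigenvalue λ of E satisfies |λ| < 1; i.e., the spectral radius of the off-diagonal transfer operator E^A_B is strictly less than 1. -/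
set_option maxHeartbeats 1000000


open Matrix
open scoped ComplexOrder

lemma quadForm_diag {n l : ℕ} (C : Matrix (Fin l) (Fin l) ℂ) (M : Matrix (Fin n) (Fin l) ℂ) (i : Fin n) :
    (M * C * Mᴴ) i i = star (fun a => star (M i a)) ⬝ᵥ C *ᵥ (fun a => star (M i a)) := by
  simp only [Matrix.mul_apply, Matrix.mulVec, dotProduct, Matrix.conjTranspose_apply,
    Finset.sum_mul, Finset.mul_sum, Pi.star_apply, star_star]
  rw [Finset.sum_comm]
  apply Finset.sum_congr rfl; intro a _
  apply Finset.sum_congr rfl; intro b _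
  ring

lemma tr_form_nonneg {n l : ℕ} {C : Matrix (Fin l) (Fin l) ℂ} (hC : C.PosSemidef)
    (M : Matrix (Fin n) (Fin l) ℂ) : 0 ≤ (M * C * Mᴴ).trace := by
  rw [Matrix.trace]
  apply Finset.sum_nonneg
  intro i _
  rw [Matrix.diag_apply, quadForm_diag]
  exact hC.dotProduct_mulVec_nonneg _

lemma tr_form_zero {n l : ℕ} {C : Matrix (Fin l) (Fin l) ℂ} (hC : C.PosDef)
    (M : Matrix (Fin n) (Fin l) ℂ) (h : (M * C * Mᴴ).trace = 0) : M = 0 := by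
  have hd : ∀ i, (M * C * Mᴴ) i i = 0 := by
    have := (Finset.sum_eq_zero_iff_of_nonneg (fun i _ => by
      rw [Matrix.diag_apply, quadForm_diag]; exact hC.posSemidef.dotProduct_mulVec_nonneg _)).mp h
    intro i; exact this i (Finset.mem_univ i)
  ext i a
  by_contra hne
  have hv : (fun a => star (M i a)) ≠ 0 := by
    intro h0
    apply hne
    have := congrFun h0 a
    simpa using congrArg star this
  have := hC.dotProduct_mulVec_pos hv
  rw [← quadForm_diag, hd i] at this
  exact lt_irrefl _ this

lemma tr_form_pos {n l : ℕ} {C : Matrix (Fin l) (Fin l) ℂ} (hC : C.PosDef)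
    (M : Matrix (Fin n) (Fin l) ℂ) (hM : M ≠ 0) : 0 < (M * C * Mᴴ).trace := by
  rcases lt_or_eq_of_le (tr_form_nonneg hC.posSemidef M) with h | h
  · exact h
  · exact absurd (tr_form_zero hC M h.symm) hM

/-- Let `A`, `B` be the tensors of two injective MPS blocks in standard form
(`Σₖ Aₖ Aₖ* = 1`, `Σₖ Bₖ Bₖ* = 1`, with positive definite `Λ_A`, `Λ_B` satisfying
`Σₖ Aₖ* Λ_A Aₖ ≤ Λ_A` and `Σₖ Bₖ* Λ_B Bₖ ≤ Λ_B`), and suppose the physical spans of the two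
blocks intersect trivially.  Then every eigenvalue `λ` of the off-diagonal transfer operator
`E^A_B : X ↦ Σₖ Bₖ X Aₖ*` satisfies `|λ| < 1`. -/
theorem stmt_16 {d l m : ℕ}
    (A : Fin d → Matrix (Fin l) (Fin l) ℂ) (B : Fin d → Matrix (Fin m) (Fin m) ℂ)
    (hA1 : ∑ k, A k * (A k)ᴴ = 1) (hB1 : ∑ k, B k * (B k)ᴴ = 1)
    (ΛA : Matrix (Fin l) (Fin l) ℂ) (hΛA : ΛA.PosDef)
    (hΛAfix : (ΛA - ∑ k, (A k)ᴴ * ΛA * A k).PosSemidef)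
    (ΛB : Matrix (Fin m) (Fin m) ℂ) (hΛB : ΛB.PosDef)
    (hΛBfix : (ΛB - ∑ k, (B k)ᴴ * ΛB * B k).PosSemidef)
    (hspan : Submodule.span ℂ {v : Fin d → ℂ | ∃ α β, v = fun k => A k α β} ⊓
        Submodule.span ℂ {v : Fin d → ℂ | ∃ α β, v = fun k => B k α β} = ⊥)
    (E : Module.End ℂ (Matrix (Fin m) (Fin l) ℂ))
    (hE : ∀ X, E X = ∑ k, B k * X * (A k)ᴴ)
    (lam : ℂ) (hlam : Module.End.HasEigenvalue E lam) :
    ‖lam‖ < 1 := by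
  obtain ⟨X, hX⟩ := hlam.exists_hasEigenvector
  have hXne : X ≠ 0 := hX.right
  have heig : ∑ k, B k * X * (A k)ᴴ = lam • X := by
    rw [← hE]; exact hX.apply_eq_smul
  set Λ := ΛA with hΛdef
  set s : ℂ := (X * Λ * Xᴴ).trace with hsdef
  -- s is a positive real
  have hs : 0 < s := tr_form_pos hΛA X hXne
  have hs_im : s.im = 0 := (Complex.lt_def.mp hs).2.symm
  have hs_re : 0 < s.re := (Complex.lt_def.mp hs).1
  -- the four sums
  set Y : Fin d → Matrix (Fin m) (Fin l) ℂ := fun k => X * (A k)ᴴ with hYdef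
  set Z : Fin d → Matrix (Fin m) (Fin l) ℂ := fun k => (B k)ᴴ * X with hZdef
  set S1 : ℂ := ∑ k, (Y k * Λ * (Y k)ᴴ).trace with hS1def
  -- I4 : Σ tr(Z Λ Zᴴ) = s
  have hI4 : ∑ k, (Z k * Λ * (Z k)ᴴ).trace = s := by
    have h : ∀ k : Fin d, (Z k * Λ * (Z k)ᴴ).trace
        = (X * Λ * Xᴴ * (B k * (B k)ᴴ)).trace := by
      intro k
      rw [hZdef]
      simp only [conjTranspose_mul, conjTranspose_conjTranspose]
      rw [show (B k)ᴴ * X * Λ * (Xᴴ * B k) = (B k)ᴴ * (X * Λ * (Xᴴ * B k)) by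
        simp only [Matrix.mul_assoc]]
      rw [Matrix.trace_mul_comm]
      simp only [Matrix.mul_assoc]
    rw [Finset.sum_congr rfl (fun k _ => h k), ← Matrix.trace_sum, ← Matrix.mul_sum, hB1, mul_one]
  -- I2 : Σ tr(Y Λ Zᴴ) = lam * s
  have hI2 : ∑ k, (Y k * Λ * (Z k)ᴴ).trace = lam * s := by
    have h : ∀ k : Fin d, (Y k * Λ * (Z k)ᴴ).trace
        = ((B k * X * (A k)ᴴ) * (Λ * Xᴴ)).trace := by
      intro k
      rw [hYdef, hZdef]
      simp only [conjTranspose_mul, conjTranspose_conjTranspose]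
      rw [show X * (A k)ᴴ * Λ * (Xᴴ * B k) = (X * (A k)ᴴ * Λ * Xᴴ) * B k by
        simp only [Matrix.mul_assoc]]
      rw [Matrix.trace_mul_comm]
      simp only [Matrix.mul_assoc]
    rw [Finset.sum_congr rfl (fun k _ => h k), ← Matrix.trace_sum, ← Matrix.sum_mul, heig]
    rw [Matrix.smul_mul, Matrix.trace_smul, smul_eq_mul, ← Matrix.mul_assoc]
  -- I3 : Σ tr(Z Λ Yᴴ) = star lam * s
  have hstar_s : star s = s := by
    rw [hsdef, ← Matrix.trace_conjTranspose]
    congr 1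
    simp only [conjTranspose_mul, conjTranspose_conjTranspose, hΛA.1.eq, Matrix.mul_assoc]
  have hI3 : ∑ k, (Z k * Λ * (Y k)ᴴ).trace = star lam * s := by
    have h : ∀ k : Fin d, (Z k * Λ * (Y k)ᴴ).trace = star ((Y k * Λ * (Z k)ᴴ).trace) := by
      intro k
      rw [← Matrix.trace_conjTranspose]
      congr 1
      simp only [conjTranspose_mul, conjTranspose_conjTranspose, hΛA.1.eq, Matrix.mul_assoc]
    rw [Finset.sum_congr rfl (fun k _ => h k), ← star_sum, hI2, star_mul', hstar_s]
  -- expansion of T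
  set M : Fin d → Matrix (Fin m) (Fin l) ℂ := fun k => Y k - lam • Z k with hMdef
  have hexp : ∀ k : Fin d, (M k * Λ * (M k)ᴴ).trace
      = (Y k * Λ * (Y k)ᴴ).trace - star lam * (Y k * Λ * (Z k)ᴴ).trace
        - lam * (Z k * Λ * (Y k)ᴴ).trace + (lam * star lam) * (Z k * Λ * (Z k)ᴴ).trace := by
    intro k
    rw [hMdef]
    simp only [conjTranspose_sub, conjTranspose_smul, Matrix.sub_mul, Matrix.mul_sub,
      Matrix.smul_mul, Matrix.mul_smul, Matrix.trace_sub, Matrix.trace_smul, smul_eq_mul,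
      smul_smul, star_star]
    ring
  have hsum : ∑ k, (M k * Λ * (M k)ᴴ).trace = S1 - (lam * star lam) * s := by
    rw [Finset.sum_congr rfl (fun k _ => hexp k)]
    rw [Finset.sum_add_distrib, Finset.sum_sub_distrib, Finset.sum_sub_distrib,
      ← Finset.mul_sum, ← Finset.mul_sum, ← Finset.mul_sum, hI2, hI3, hI4, ← hS1def]
    ring
  have hT : (0:ℂ) ≤ S1 - (lam * star lam) * s := by
    rw [← hsum]
    exact Finset.sum_nonneg (fun k _ => tr_form_nonneg hΛA.posSemidef (M k))
  -- S1 ≤ s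
  have hS1le : S1 ≤ s := by
    have hpsd : (0:ℂ) ≤ (X * (Λ - ∑ k, (A k)ᴴ * Λ * A k) * Xᴴ).trace :=
      tr_form_nonneg hΛAfix X
    have hsplit : (X * (Λ - ∑ k, (A k)ᴴ * Λ * A k) * Xᴴ).trace = s - S1 := by
      rw [Matrix.mul_sub, Matrix.sub_mul, Matrix.trace_sub, ← hsdef]
      congr 1
      rw [hS1def]
      have h : ∀ k : Fin d, (Y k * Λ * (Y k)ᴴ).trace
          = (X * ((A k)ᴴ * Λ * A k) * Xᴴ).trace := by
        intro k
        rw [hYdef]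
        simp only [conjTranspose_mul, conjTranspose_conjTranspose, Matrix.mul_assoc]
      rw [Finset.sum_congr rfl (fun k _ => h k), ← Matrix.trace_sum]
      congr 1
      rw [Matrix.mul_sum, Matrix.sum_mul]
    have h2 : (0:ℂ) ≤ s - S1 := hsplit ▸ hpsd
    exact sub_nonneg.mp h2
  -- |lam|^2 ≤ 1
  have hnsq : Complex.normSq lam ≤ 1 := by
    have h1 := (Complex.le_def.mp hT).1
    have h2 := (Complex.le_def.mp hS1le).1
    have hmc : lam * star lam = (Complex.normSq lam : ℂ) := by
      rw [Complex.star_def, Complex.mul_conj]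
    rw [hmc] at h1
    simp only [Complex.sub_re, Complex.mul_re, Complex.ofReal_re, Complex.ofReal_im,
      Complex.zero_re, zero_mul, sub_zero] at h1
    nlinarith [h1, h2, hs_re]
  have habs_le : ‖lam‖ ≤ 1 := by
    nlinarith [Complex.sq_norm lam, norm_nonneg lam, hnsq]
  rcases lt_or_eq_of_le habs_le with hlt | heq1
  · exact hlt
  exfalso
  -- equality case: normSq lam = 1
  have hnsq1 : lam * star lam = 1 := by
    rw [Complex.star_def, Complex.mul_conj, ← Complex.sq_norm, heq1]
    norm_num
  have hTzero : ∑ k, (M k * Λ * (M k)ᴴ).trace = 0 := by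
    have hle : ∑ k, (M k * Λ * (M k)ᴴ).trace ≤ 0 := by
      have : S1 - (lam * star lam) * s = S1 - s := by rw [hnsq1, one_mul]
      rw [hsum, this]
      exact sub_nonpos.mpr hS1le
    have hge : (0:ℂ) ≤ ∑ k, (M k * Λ * (M k)ᴴ).trace :=
      Finset.sum_nonneg (fun k _ => tr_form_nonneg hΛA.posSemidef (M k))
    exact le_antisymm hle hge
  have hMk : ∀ k : Fin d, X * (A k)ᴴ = lam • ((B k)ᴴ * X) := by
    intro k
    have h0 : (M k * Λ * (M k)ᴴ).trace = 0 := by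
      have := (Finset.sum_eq_zero_iff_of_nonneg
        (fun k _ => tr_form_nonneg hΛA.posSemidef (M k))).mp hTzero
      exact this k (Finset.mem_univ k)
    have h1 : Y k - lam • Z k = 0 := tr_form_zero hΛA (M k) h0
    exact sub_eq_zero.mp h1
  -- span argument: every entry of X * (A k)ᴴ is zero
  have hentry : ∀ (k : Fin d) (i : Fin m) (β : Fin l), (X * (A k)ᴴ) i β = 0 := by
    intro k i β
    set v : Fin d → ℂ := fun k' => ∑ α, star (X i α) * A k' β α with hv
    have hvk : ∀ k' : Fin d, v k' = star ((X * (A k')ᴴ) i β) := by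
      intro k'
      simp only [hv, Matrix.mul_apply, Matrix.conjTranspose_apply, star_sum, star_mul',
        star_star]
    have hvA : v ∈ Submodule.span ℂ {v : Fin d → ℂ | ∃ α β, v = fun k => A k α β} := by
      have hrep : v = ∑ α, star (X i α) • (fun k' => A k' β α) := by
        funext k'
        simp [hv, Finset.sum_apply]
      rw [hrep]
      exact Submodule.sum_mem _ (fun α _ => Submodule.smul_mem _ _
        (Submodule.subset_span ⟨β, α, rfl⟩))
    have hvB : v ∈ Submodule.span ℂ {v : Fin d → ℂ | ∃ α β, v = fun k => B k α β} := by
      have hrep : v = star lam • ∑ j, star (X j β) • (fun k' => B k' j i) := by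
        funext k'
        rw [hvk k', hMk k']
        simp only [Matrix.smul_apply, Matrix.mul_apply, Matrix.conjTranspose_apply,
          Pi.smul_apply, Finset.sum_apply, smul_eq_mul, star_mul', star_sum, star_star]
        congr 1
        exact Finset.sum_congr rfl (fun j _ => mul_comm _ _)
      rw [hrep]
      exact Submodule.smul_mem _ _ (Submodule.sum_mem _ (fun j _ => Submodule.smul_mem _ _
        (Submodule.subset_span ⟨j, i, rfl⟩)))
    have hv0 : v = 0 := by
      have hmem : v ∈ (⊥ : Submodule ℂ (Fin d → ℂ)) := by
        rw [← hspan]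
        exact Submodule.mem_inf.mpr ⟨hvA, hvB⟩
      simpa using hmem
    have := congrFun hv0 k
    rw [hvk k] at this
    simpa using congrArg star this
  have hXA : ∀ k : Fin d, X * (A k)ᴴ = (0 : Matrix (Fin m) (Fin l) ℂ) := by
    intro k
    ext i β
    simpa using hentry k i β
  have hzero : lam • X = 0 := by
    rw [← heig]
    apply Finset.sum_eq_zero
    intro k _
    rw [Matrix.mul_assoc, hXA k, Matrix.mul_zero]
  rcases smul_eq_zero.mp hzero with h | h
  · rw [h] at heq1
    simpa using heq1
  · exact hXne h
end
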